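/- Let ε ∈ (0,1) and α > 0, and define h(k₂) = k₂²/(k₂²+α²) + (α²/(k₂²+α²))·1{k₂ ≤ 2ε/(1−ε)}·((1+ε)/(1+k₂) − (1−ε))/(2ε) for k₂ > 0. Then for every square-integrable real random variable Y with mean 1 and standard deviation at most α, and R uniform on [1−ε, 1+ε] independent of Y, one has P(YR ≤ 1+ε) ≥ inf_{k₂ > 0} h(k₂). -/

import Mathlib

open MeasureTheory ProbabilityTheory Real

/-- The uniform probability measure on the interval `[a, b]`. -/
noncomputable def uniformIcc (a b : ℝ) : Measure ℝ :=
  (ENNReal.ofReal (b - a))⁻¹ • (MeasureTheory.volume.restrict (Set.Icc a b))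

/-- The median of `2*n+1` real values: their `(n+1)`-st smallest value. -/
noncomputable def medianOf {n : ℕ} (v : Fin (2 * n + 1) → ℝ) : ℝ :=
  (Multiset.sort (↑(List.ofFn v)) (· ≤ ·)).get ⟨n, by simp; omega⟩

/-- The nuisance factor `f(ε) = (1+ε)/((1-ε)² (1+ε-ε²))`. -/
noncomputable def nuisance (ε : ℝ) : ℝ := (1 + ε) / ((1 - ε) ^ 2 * (1 + ε - ε ^ 2))

/-- The function `h(k₂) = k₂²/(k₂²+α²) + (α²/(k₂²+α²))·1{k₂ ≤ 2ε/(1−ε)}·((1+ε)/(1+k₂) − (1−ε))/(2ε)`. -/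
noncomputable def hFun (ε α k₂ : ℝ) : ℝ :=
  k₂ ^ 2 / (k₂ ^ 2 + α ^ 2) +
    α ^ 2 / (k₂ ^ 2 + α ^ 2) *
      (if k₂ ≤ 2 * ε / (1 - ε) then ((1 + ε) / (1 + k₂) - (1 - ε)) / (2 * ε) else 0)

/-- The "CDF piece" function. -/
noncomputable def Gfun (ε y : ℝ) : ℝ :=
  if y ≤ 1 then 1 else max 0 (((1 + ε) / y - (1 - ε)) / (2 * ε))

lemma measurable_Gfun (ε : ℝ) : Measurable (Gfun ε) := by
  unfold Gfun
  apply Measurable.ite (measurableSet_le measurable_id measurable_const) measurable_const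
  exact (measurable_const.max (((measurable_const.div measurable_id).sub
    measurable_const).div measurable_const))

lemma Gfun_nonneg (ε y : ℝ) : 0 ≤ Gfun ε y := by
  unfold Gfun; split
  · norm_num
  · exact le_max_left _ _

lemma Gfun_le_one {ε : ℝ} (hε : 0 < ε) (y : ℝ) : Gfun ε y ≤ 1 := by
  unfold Gfun; split
  · exact le_rfl
  · rename_i h
    push_neg at h
    have hy : (0:ℝ) < y := by linarith
    have h1 : (1 + ε) / y ≤ 1 + ε := by
      rw [div_le_iff₀ hy]; nlinarith
    have : ((1 + ε) / y - (1 - ε)) / (2 * ε) ≤ 1 := by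
      rw [div_le_one (by linarith)]; linarith
    exact max_le (by norm_num) this

/-- tangent line inequality for φ(k) = ((1+ε)/(1+k) - (1-ε))/(2ε), in terms of u = 1+κ, y. -/
lemma tangent {ε u y : ℝ} (hε : 0 < ε) (hu : 0 < u) (hy : 0 < y) :
    ((1 + ε) / u - (1 - ε)) / (2 * ε) - (1 + ε) / (2 * ε * u ^ 2) * (y - u)
      ≤ ((1 + ε) / y - (1 - ε)) / (2 * ε) := by
  rw [← sub_nonneg]
  have key : ((1 + ε) / y - (1 - ε)) / (2 * ε) -
      (((1 + ε) / u - (1 - ε)) / (2 * ε) - (1 + ε) / (2 * ε * u ^ 2) * (y - u))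
      = (1 + ε) * (y - u) ^ 2 / (2 * ε * y * u ^ 2) := by
    field_simp
    ring
  rw [key]
  positivity

noncomputable def sval (ε κ : ℝ) : ℝ :=
  if κ ≤ 2 * ε / (1 - ε) then ((1 + ε) / (1 + κ) - (1 - ε)) / (2 * ε) else 0

noncomputable def cslope (ε κ : ℝ) : ℝ :=
  if κ ≤ 2 * ε / (1 - ε) then -((1 + ε) / (2 * ε * (1 + κ) ^ 2)) else 0

lemma sval_nonneg {ε κ : ℝ} (hε : ε ∈ Set.Ioo (0:ℝ) 1) (hκ : 0 ≤ κ) : 0 ≤ sval ε κ := by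
  obtain ⟨hε0, hε1⟩ := hε
  unfold sval; split
  · rename_i h
    have h2 : κ * (1 - ε) ≤ 2 * ε := by
      rw [← le_div_iff₀ (by linarith)] at *; linarith
    have h3 : (1 - ε) ≤ (1 + ε) / (1 + κ) := by
      rw [le_div_iff₀ (by linarith)]; nlinarith
    have h4 : 0 ≤ (1 + ε) / (1 + κ) - (1 - ε) := by linarith
    positivity
  · exact le_rfl

lemma sval_le_one {ε κ : ℝ} (hε : ε ∈ Set.Ioo (0:ℝ) 1) (hκ : 0 ≤ κ) : sval ε κ ≤ 1 := by
  obtain ⟨hε0, hε1⟩ := hε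
  unfold sval; split
  · have h1 : (1 + ε) / (1 + κ) ≤ 1 + ε := by
      rw [div_le_iff₀ (by linarith)]; nlinarith
    rw [div_le_one (by linarith)]; linarith
  · norm_num

lemma hFun_eq {ε α κ : ℝ} (hα : 0 < α) :
    hFun ε α κ = 1 - α ^ 2 / (κ ^ 2 + α ^ 2) * (1 - sval ε κ) := by
  have h : κ ^ 2 + α ^ 2 > 0 := by positivity
  have hS : κ ^ 2 + α ^ 2 ≠ 0 := ne_of_gt h
  unfold hFun sval
  set B := (if κ ≤ 2 * ε / (1 - ε) then ((1 + ε) / (1 + κ) - (1 - ε)) / (2 * ε) else 0) with hB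
  field_simp
  ring

lemma hFun_nonneg {ε α κ : ℝ} (hε : ε ∈ Set.Ioo (0:ℝ) 1) (hα : 0 < α) (hκ : 0 ≤ κ) :
    0 ≤ hFun ε α κ := by
  have h : κ ^ 2 + α ^ 2 > 0 := by positivity
  have h1 := sval_nonneg hε hκ
  unfold hFun; unfold sval at h1
  have h2 : 0 ≤ κ ^ 2 / (κ ^ 2 + α ^ 2) := by positivity
  have h3 : 0 ≤ α ^ 2 / (κ ^ 2 + α ^ 2) := by positivity
  have h4 := mul_nonneg h3 h1
  linarith

lemma hFun_le_one {ε α κ : ℝ} (hε : ε ∈ Set.Ioo (0:ℝ) 1) (hα : 0 < α) (hκ : 0 ≤ κ) :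
    hFun ε α κ ≤ 1 := by
  rw [hFun_eq hα]
  have h1 := sval_le_one hε hκ
  have h3 : 0 ≤ α ^ 2 / (κ ^ 2 + α ^ 2) := by positivity
  nlinarith

lemma minorant {ε κ y : ℝ} (hε : ε ∈ Set.Ioo (0:ℝ) 1) (hκ : 0 < κ) (hy : 1 < y) :
    sval ε κ + cslope ε κ * (y - 1 - κ) ≤ Gfun ε y := by
  obtain ⟨hε0, hε1⟩ := hε
  unfold sval cslope Gfun
  rw [if_neg (not_le.2 hy)]
  split
  · refine le_trans ?_ (le_max_right _ _)
    have ht := tangent (u := 1 + κ) (y := y) hε0 (by linarith) (by linarith)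
    have : y - 1 - κ = y - (1 + κ) := by ring
    rw [this]
    linarith
  · simpa using le_max_left _ _

lemma uniform_bound {ε : ℝ} (hε : ε ∈ Set.Ioo (0:ℝ) 1) (y : ℝ) :
    ENNReal.ofReal (Gfun ε y) ≤ uniformIcc (1 - ε) (1 + ε) {r | y * r ≤ 1 + ε} := by
  obtain ⟨hε0, hε1⟩ := hε
  have hT : MeasurableSet {r : ℝ | y * r ≤ 1 + ε} :=
    measurableSet_le (measurable_id.const_mul y) measurable_const
  have happ : uniformIcc (1 - ε) (1 + ε) {r | y * r ≤ 1 + ε} =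
      (ENNReal.ofReal (2 * ε))⁻¹ *
        volume ({r | y * r ≤ 1 + ε} ∩ Set.Icc (1 - ε) (1 + ε)) := by
    rw [uniformIcc, Measure.smul_apply, Measure.restrict_apply hT]
    norm_num
    ring_nf
    rw [ENNReal.ofReal_mul' (by norm_num), ENNReal.ofReal_ofNat]
    exact mul_comm _ _
  rw [happ]
  have h2ε : (0:ℝ) < 2 * ε := by linarith
  by_cases hy : y ≤ 1
  · -- whole interval is included
    have hsub : Set.Icc (1 - ε) (1 + ε) ⊆ {r | y * r ≤ 1 + ε} := by
      intro r hr
      have hr0 : (0:ℝ) ≤ r := le_trans (by linarith) hr.1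
      have : y * r ≤ 1 * r := mul_le_mul_of_nonneg_right hy hr0
      simp only [Set.mem_setOf_eq]
      nlinarith [hr.2]
    rw [Set.inter_eq_self_of_subset_right hsub, Real.volume_Icc]
    have hval : (1:ℝ) + ε - (1 - ε) = 2 * ε := by ring
    rw [hval, ENNReal.inv_mul_cancel (by simp [h2ε, hε0]) ENNReal.ofReal_ne_top]
    rw [Gfun, if_pos hy]
    simp
  · push_neg at hy
    have hy0 : (0:ℝ) < y := by linarith
    rw [Gfun, if_neg (not_le.2 hy)]
    set v := ((1 + ε) / y - (1 - ε)) / (2 * ε) with hv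
    rcases le_or_gt v 0 with hvle | hvpos
    · rw [max_eq_left hvle]
      simp
    · rw [max_eq_right (le_of_lt hvpos)]
      set t := (1 + ε) / y with htdef
      have hta : 1 - ε < t := by
        have := (div_pos_iff.1 hvpos)
        rcases this with ⟨h1, _⟩ | ⟨_, h2⟩
        · linarith [h1]
        · linarith
      have htb : t < 1 + ε := div_lt_self (by linarith) hy
      have hsub : Set.Icc (1 - ε) t ⊆ {r | y * r ≤ 1 + ε} ∩ Set.Icc (1 - ε) (1 + ε) := by
        intro r hr
        constructor
        · have : y * r ≤ y * t := mul_le_mul_of_nonneg_left hr.2 (le_of_lt hy0)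
          have ht' : y * t = 1 + ε := by
            rw [htdef, mul_div_cancel₀ _ (ne_of_gt hy0)]
          simp only [Set.mem_setOf_eq]; linarith
        · exact ⟨hr.1, le_trans hr.2 (le_of_lt htb)⟩
      have hvol : ENNReal.ofReal (t - (1 - ε)) ≤
          volume ({r | y * r ≤ 1 + ε} ∩ Set.Icc (1 - ε) (1 + ε)) := by
        calc ENNReal.ofReal (t - (1 - ε)) = volume (Set.Icc (1 - ε) t) := by
              rw [Real.volume_Icc]
          _ ≤ _ := measure_mono hsub
      calc ENNReal.ofReal v = ENNReal.ofReal (t - (1 - ε)) / ENNReal.ofReal (2 * ε) := by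
            rw [hv, ENNReal.ofReal_div_of_pos h2ε]
        _ ≤ volume ({r | y * r ≤ 1 + ε} ∩ Set.Icc (1 - ε) (1 + ε)) / ENNReal.ofReal (2 * ε) :=
            ENNReal.div_le_div_right hvol _
        _ = _ := by rw [ENNReal.div_eq_inv_mul]

theorem partA {Ω : Type*} [MeasureSpace Ω]
    [IsProbabilityMeasure (ℙ : Measure Ω)]
    (ε : ℝ) (hε : ε ∈ Set.Ioo (0 : ℝ) 1)
    (Y R : Ω → ℝ) (hYm : Measurable Y) (hRm : Measurable R)
    (hR : Measure.map R ℙ = uniformIcc (1 - ε) (1 + ε))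
    (hindep : IndepFun Y R ℙ) :
    ∫ ω, Gfun ε (Y ω) ∂ℙ ≤ (ℙ {ω | Y ω * R ω ≤ 1 + ε}).toReal := by
  obtain ⟨hε0, hε1⟩ := hε
  set μY := Measure.map Y ℙ with hμY
  have hPY : IsProbabilityMeasure μY := Measure.isProbabilityMeasure_map hYm.aemeasurable
  have hmap : Measure.map (fun ω => (Y ω, R ω)) ℙ = μY.prod (Measure.map R ℙ) :=
    (indepFun_iff_map_prod_eq_prod_map_map hYm.aemeasurable hRm.aemeasurable).1 hindep
  have hS : MeasurableSet {p : ℝ × ℝ | p.1 * p.2 ≤ 1 + ε} :=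
    measurableSet_le (measurable_fst.mul measurable_snd) measurable_const
  have hpre : (fun ω => (Y ω, R ω)) ⁻¹' {p : ℝ × ℝ | p.1 * p.2 ≤ 1 + ε}
      = {ω | Y ω * R ω ≤ 1 + ε} := rfl
  have h1 : ℙ {ω | Y ω * R ω ≤ 1 + ε}
      = ∫⁻ y, (Measure.map R ℙ) {r | y * r ≤ 1 + ε} ∂μY := by
    rw [← hpre, ← Measure.map_apply (hYm.prodMk hRm) hS, hmap, Measure.prod_apply hS]
    rfl
  have h2 : ∫⁻ y, ENNReal.ofReal (Gfun ε y) ∂μY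
      ≤ ∫⁻ y, (Measure.map R ℙ) {r | y * r ≤ 1 + ε} ∂μY := by
    refine lintegral_mono fun y => ?_
    rw [hR]
    exact uniform_bound ⟨hε0, hε1⟩ y
  have hint : Integrable (Gfun ε) μY := by
    refine Integrable.mono' (integrable_const 1) (measurable_Gfun ε).aestronglyMeasurable ?_
    refine Filter.Eventually.of_forall fun y => ?_
    rw [Real.norm_eq_abs, abs_of_nonneg (Gfun_nonneg ε y)]
    exact Gfun_le_one hε0 y
  have h3 : ∫⁻ y, ENNReal.ofReal (Gfun ε y) ∂μY = ENNReal.ofReal (∫ y, Gfun ε y ∂μY) :=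
    (ofReal_integral_eq_lintegral_ofReal hint
      (Filter.Eventually.of_forall fun y => Gfun_nonneg ε y)).symm
  have h4 : ∫ y, Gfun ε y ∂μY = ∫ ω, Gfun ε (Y ω) ∂ℙ :=
    integral_map hYm.aemeasurable (measurable_Gfun ε).aestronglyMeasurable
  have h5 : ENNReal.ofReal (∫ ω, Gfun ε (Y ω) ∂ℙ) ≤ ℙ {ω | Y ω * R ω ≤ 1 + ε} := by
    rw [h1, ← h4, ← h3]; exact h2
  exact (ENNReal.ofReal_le_iff_le_toReal (measure_ne_top _ _)).1 h5

set_option maxHeartbeats 1000000 in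
theorem partB {Ω : Type*} [MeasureSpace Ω]
    [IsProbabilityMeasure (ℙ : Measure Ω)]
    (ε α : ℝ) (hε : ε ∈ Set.Ioo (0 : ℝ) 1) (hα : 0 < α)
    (Y : Ω → ℝ) (hYm : Measurable Y)
    (hY2 : MemLp Y 2 ℙ)
    (hmean : ∫ ω, Y ω ∂ℙ = 1)
    (hsd : Real.sqrt (variance Y ℙ) ≤ α) :
    ∃ κ > 0, hFun ε α κ ≤ ∫ ω, Gfun ε (Y ω) ∂ℙ := by
  obtain ⟨hε0, hε1⟩ := hε
  have hYint : Integrable Y ℙ := hY2.integrable one_le_two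
  set f : Ω → ℝ := fun ω => Y ω - 1 with hf
  have hf_int : Integrable f ℙ := hYint.sub (integrable_const 1)
  have hf2_int : Integrable (fun ω => f ω ^ 2) ℙ := (hY2.sub (memLp_const 1)).integrable_sq
  have hfmean : ∫ ω, f ω ∂ℙ = 0 := by
    rw [hf]
    rw [integral_sub hYint (integrable_const 1), hmean, integral_const]
    simp
  set A : Set Ω := {ω | 1 < Y ω} with hAdef
  have hA : MeasurableSet A := measurableSet_lt measurable_const hYm
  set μ0 : ℝ := ∫ ω in A, f ω ∂ℙ with hμ0
  have hμ0_nonneg : 0 ≤ μ0 := by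
    refine setIntegral_nonneg hA fun ω hω => ?_
    have : 1 < Y ω := hω
    simp only [hf]; linarith
  -- Integrability of Gfun ∘ Y
  have hGY_int : Integrable (fun ω => Gfun ε (Y ω)) ℙ := by
    refine Integrable.mono' (integrable_const 1)
      ((measurable_Gfun ε).comp hYm).aestronglyMeasurable ?_
    refine Filter.Eventually.of_forall fun ω => ?_
    rw [Real.norm_eq_abs, abs_of_nonneg (Gfun_nonneg ε _)]
    exact Gfun_le_one hε0 _
  rcases eq_or_lt_of_le hμ0_nonneg with hμ0z | hμ0pos
  · -- degenerate case : P(A) = 0, integral is 1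
    have hnn : 0 ≤ᵐ[Measure.restrict ℙ A] f := by
      refine (ae_restrict_iff' hA).2 (Filter.Eventually.of_forall fun ω hω => ?_)
      have : 1 < Y ω := hω
      simp only [hf, Pi.zero_apply]; linarith
    have hz : f =ᵐ[Measure.restrict ℙ A] 0 :=
      (setIntegral_eq_zero_iff_of_nonneg_ae hnn hf_int.integrableOn).1 hμ0z.symm
    have hAz : ℙ A = 0 := by
      have hsub : A ⊆ {ω | ¬ f ω = 0} := by
        intro ω hω
        have : 1 < Y ω := hω
        simp only [hf, Set.mem_setOf_eq]
        intro h; linarith [sub_eq_zero.1 h]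
      have h0 : Measure.restrict ℙ A {ω | ¬ f ω = 0} = 0 := hz
      refine le_antisymm ?_ zero_le
      calc ℙ A = Measure.restrict ℙ A A := (Measure.restrict_apply_self _ _).symm
        _ ≤ Measure.restrict ℙ A {ω | ¬ f ω = 0} := measure_mono hsub
        _ = 0 := h0
    have hGae : (fun ω => Gfun ε (Y ω)) =ᵐ[ℙ] fun _ => 1 := by
      have : ∀ᵐ ω ∂ℙ, ω ∉ A := by
        rw [ae_iff]
        simpa using hAz
      filter_upwards [this] with ω hω
      have hY1 : Y ω ≤ 1 := by
        by_contra h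
        exact hω (by simpa [hAdef] using not_le.1 h)
      simp [Gfun, if_pos hY1]
    refine ⟨1, one_pos, ?_⟩
    rw [integral_congr_ae hGae, integral_const]
    simpa using hFun_le_one ⟨hε0, hε1⟩ hα (le_of_lt one_pos)
  · -- main case
    set p : ℝ := (ℙ A).toReal with hpdef
    have hAne : ℙ A ≠ 0 := by
      intro h
      rw [hμ0, Measure.restrict_eq_zero.2 h, integral_zero_measure] at hμ0pos
      exact lt_irrefl _ hμ0pos
    have hp_pos : 0 < p := ENNReal.toReal_pos hAne (measure_ne_top _ _)
    set q : ℝ := (ℙ Aᶜ).toReal with hqdef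
    have hpq : p + q = 1 := by
      rw [hpdef, hqdef, ← ENNReal.toReal_add (measure_ne_top _ _) (measure_ne_top _ _),
        measure_add_measure_compl hA]
      simp
    have hcompl : ∫ ω in Aᶜ, f ω ∂ℙ = -μ0 := by
      have := integral_add_compl hA hf_int
      rw [hfmean] at this
      linarith [this]
    have hp1 : p < 1 := by
      by_contra h
      push_neg at h
      have hq0 : q ≤ 0 := by linarith
      have hq0' : q = 0 := le_antisymm hq0 ENNReal.toReal_nonneg
      have hAcz : ℙ Aᶜ = 0 := by
        rw [hqdef] at hq0'
        exact (ENNReal.toReal_eq_zero_iff _).1 hq0' |>.resolve_right (measure_ne_top _ _)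
      rw [Measure.restrict_eq_zero.2 hAcz, integral_zero_measure] at hcompl
      linarith
    have hq_eq : q = 1 - p := by linarith
    set κ : ℝ := μ0 / p with hκdef
    have hκpos : 0 < κ := div_pos hμ0pos hp_pos
    have hκp : κ * p = μ0 := by
      rw [hκdef]; field_simp
    -- variance bound
    have hvar : ∫ ω, f ω ^ 2 ∂ℙ ≤ α ^ 2 := by
      have hveq : variance Y ℙ = ∫ ω, f ω ^ 2 ∂ℙ := by
        rw [variance_eq_integral hY2.aemeasurable, hmean]
      have hvnn : 0 ≤ variance Y ℙ := variance_nonneg _ _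
      have hle : variance Y ℙ ≤ α ^ 2 := by
        nlinarith [Real.sq_sqrt hvnn, Real.sqrt_nonneg (variance Y ℙ)]
      rw [← hveq]; exact hle
    -- lower bound on ∫_A f²
    have hA2 : μ0 ^ 2 / p ≤ ∫ ω in A, f ω ^ 2 ∂ℙ := by
      have hpt : ∀ ω ∈ A, 2 * κ * f ω - κ ^ 2 ≤ f ω ^ 2 := by
        intro ω _; nlinarith [sq_nonneg (f ω - κ)]
      have hmono : ∫ ω in A, (2 * κ * f ω - κ ^ 2) ∂ℙ ≤ ∫ ω in A, f ω ^ 2 ∂ℙ := by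
        refine setIntegral_mono_on ((hf_int.restrict.const_mul (2*κ)).sub (integrable_const _))
          hf2_int.restrict hA hpt
      have hcalc : ∫ ω in A, (2 * κ * f ω - κ ^ 2) ∂ℙ = 2 * κ * μ0 - κ ^ 2 * p := by
        rw [integral_sub (hf_int.restrict.const_mul (2*κ)) (integrable_const _),
          integral_const_mul, setIntegral_const, measureReal_def]
        simp [hpdef, mul_comm]
        exact Or.inl rfl
      have heq : 2 * κ * μ0 - κ ^ 2 * p = μ0 ^ 2 / p := by
        rw [eq_div_iff (ne_of_gt hp_pos)]
        linear_combination (μ0 - κ * p) * hκp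
      rw [← heq, ← hcalc]; exact hmono
    -- lower bound on ∫_Aᶜ f²
    have hAc2 : μ0 ^ 2 / (1 - p) ≤ ∫ ω in Aᶜ, f ω ^ 2 ∂ℙ := by
      set lam : ℝ := -μ0 / (1 - p) with hlam
      have hpt : ∀ ω ∈ Aᶜ, 2 * lam * f ω - lam ^ 2 ≤ f ω ^ 2 := by
        intro ω _; nlinarith [sq_nonneg (f ω - lam)]
      have hmono : ∫ ω in Aᶜ, (2 * lam * f ω - lam ^ 2) ∂ℙ ≤ ∫ ω in Aᶜ, f ω ^ 2 ∂ℙ :=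
        setIntegral_mono_on ((hf_int.restrict.const_mul (2*lam)).sub (integrable_const _))
          hf2_int.restrict hA.compl hpt
      have hcalc : ∫ ω in Aᶜ, (2 * lam * f ω - lam ^ 2) ∂ℙ = 2 * lam * (-μ0) - lam ^ 2 * (1 - p) := by
        rw [integral_sub (hf_int.restrict.const_mul (2*lam)) (integrable_const _),
          integral_const_mul, hcompl, setIntegral_const, measureReal_def]
        rw [← hqdef, hq_eq]
        simp [mul_comm]
      have h1p : (1:ℝ) - p ≠ 0 := by linarith
      have hl : lam * (1 - p) = -μ0 := by
        rw [hlam]; field_simp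
      have heq : 2 * lam * (-μ0) - lam ^ 2 * (1 - p) = μ0 ^ 2 / (1 - p) := by
        rw [eq_div_iff h1p]
        linear_combination (-(lam * (1 - p) + μ0)) * hl
      rw [← heq, ← hcalc]; exact hmono
    have htotal : ∫ ω in A, f ω ^ 2 ∂ℙ + ∫ ω in Aᶜ, f ω ^ 2 ∂ℙ = ∫ ω, f ω ^ 2 ∂ℙ :=
      integral_add_compl hA hf2_int
    have hμsq : μ0 ^ 2 ≤ α ^ 2 * (p * (1 - p)) := by
      have h1 : μ0 ^ 2 / p + μ0 ^ 2 / (1 - p) ≤ α ^ 2 := by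
        rw [← htotal] at hvar; linarith
      have h1p : (1:ℝ) - p ≠ 0 := by linarith
      have h2 : μ0 ^ 2 / p + μ0 ^ 2 / (1 - p) = μ0 ^ 2 / (p * (1 - p)) := by
        rw [div_add_div _ _ (ne_of_gt hp_pos) h1p]
        congr 1
        ring
      rw [h2, div_le_iff₀ (by nlinarith)] at h1
      linarith
    have hκ2 : κ ^ 2 * p ^ 2 = μ0 ^ 2 := by
      rw [hκdef]; field_simp
    have hple : p ≤ α ^ 2 / (κ ^ 2 + α ^ 2) := by
      rw [le_div_iff₀ (by positivity)]
      nlinarith [hμsq, hκ2, hp_pos]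
    -- integral of Gfun split
    have hGsplit : ∫ ω in A, Gfun ε (Y ω) ∂ℙ + ∫ ω in Aᶜ, Gfun ε (Y ω) ∂ℙ
        = ∫ ω, Gfun ε (Y ω) ∂ℙ := integral_add_compl hA hGY_int
    have hAc_part : ∫ ω in Aᶜ, Gfun ε (Y ω) ∂ℙ = 1 - p := by
      have : ∀ ω ∈ Aᶜ, Gfun ε (Y ω) = 1 := by
        intro ω hω
        have hY1 : Y ω ≤ 1 := not_lt.1 hω
        simp [Gfun, if_pos hY1]
      rw [setIntegral_congr_fun hA.compl this, setIntegral_const, measureReal_def, ← hqdef, hq_eq]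
      simp
    have hA_part : p * sval ε κ ≤ ∫ ω in A, Gfun ε (Y ω) ∂ℙ := by
      have hpt : ∀ ω ∈ A, (sval ε κ - cslope ε κ * κ) + cslope ε κ * f ω ≤ Gfun ε (Y ω) := by
        intro ω hω
        have hy : 1 < Y ω := hω
        have hm := minorant (κ := κ) ⟨hε0, hε1⟩ hκpos hy
        have heq2 : (sval ε κ - cslope ε κ * κ) + cslope ε κ * f ω
            = sval ε κ + cslope ε κ * (Y ω - 1 - κ) := by
          simp only [hf]; ring
        rw [heq2]; exact hm
      have hmono : ∫ ω in A, ((sval ε κ - cslope ε κ * κ) + cslope ε κ * f ω) ∂ℙ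
          ≤ ∫ ω in A, Gfun ε (Y ω) ∂ℙ :=
        setIntegral_mono_on ((integrable_const _).add
          (hf_int.restrict.const_mul _)) hGY_int.restrict hA hpt
      have hcalc : ∫ ω in A, ((sval ε κ - cslope ε κ * κ) + cslope ε κ * f ω) ∂ℙ
          = (sval ε κ - cslope ε κ * κ) * p + cslope ε κ * μ0 := by
        rw [integral_add (integrable_const _) (hf_int.restrict.const_mul _),
          integral_const_mul, setIntegral_const, measureReal_def, ← hpdef, smul_eq_mul, mul_comm]
      have heq3 : (sval ε κ - cslope ε κ * κ) * p + cslope ε κ * μ0 = sval ε κ * p := by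
        linear_combination (-(cslope ε κ)) * hκp
      rw [hcalc, heq3] at hmono
      linarith [hmono]
    clear_value f A μ0 p q κ
    refine ⟨κ, hκpos, ?_⟩
    rw [hFun_eq hα]
    have hs1 := sval_le_one ⟨hε0, hε1⟩ (le_of_lt hκpos)
    have hmul : p * (1 - sval ε κ) ≤ α ^ 2 / (κ ^ 2 + α ^ 2) * (1 - sval ε κ) :=
      mul_le_mul_of_nonneg_right hple (by linarith)
    have hexp : 1 - p * (1 - sval ε κ) = 1 - p + p * sval ε κ := by ring
    have hfin : 1 - p * (1 - sval ε κ) ≤ ∫ ω, Gfun ε (Y ω) ∂ℙ := by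
      rw [← hGsplit, hAc_part, hexp]
      linarith [hA_part]
    linarith

/-- For `ε ∈ (0,1)`, `α > 0`, every square-integrable `Y` with mean 1 and
standard deviation at most `α`, and `R` uniform on `[1−ε,1+ε]` independent of `Y`,
`P(YR ≤ 1+ε) ≥ inf_{k₂ > 0} h(k₂)`. -/
theorem prob_ge_inf_hFun {Ω : Type*} [MeasureSpace Ω]
    [IsProbabilityMeasure (ℙ : Measure Ω)]
    (ε α : ℝ) (hε : ε ∈ Set.Ioo (0 : ℝ) 1) (hα : 0 < α)
    (Y R : Ω → ℝ) (hYm : Measurable Y) (hRm : Measurable R)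
    (hY2 : MemLp Y 2 ℙ)
    (hmean : ∫ ω, Y ω ∂ℙ = 1)
    (hsd : Real.sqrt (variance Y ℙ) ≤ α)
    (hR : Measure.map R ℙ = uniformIcc (1 - ε) (1 + ε))
    (hindep : IndepFun Y R ℙ) :
    sInf {y : ℝ | ∃ k₂ > 0, y = hFun ε α k₂} ≤ (ℙ {ω | Y ω * R ω ≤ 1 + ε}).toReal := by
  obtain ⟨κ, hκpos, hκle⟩ := partB ε α hε hα Y hYm hY2 hmean hsd
  have hPA := partA ε hε Y R hYm hRm hR hindep
  have hbdd : BddBelow {y : ℝ | ∃ k₂ > 0, y = hFun ε α k₂} := by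
    refine ⟨0, fun x hx => ?_⟩
    obtain ⟨k₂, hk₂, rfl⟩ := hx
    exact hFun_nonneg hε hα (le_of_lt hk₂)
  calc sInf {y : ℝ | ∃ k₂ > 0, y = hFun ε α k₂} ≤ hFun ε α κ :=
        csInf_le hbdd ⟨κ, hκpos, rfl⟩
    _ ≤ ∫ ω, Gfun ε (Y ω) ∂ℙ := hκle
    _ ≤ (ℙ {ω | Y ω * R ω ≤ 1 + ε}).toReal := hPA
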